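/- For all x ∈ ℝⁿ, the Ackley function satisfies f(x) ≥ 0, with equality if and only if x = (0,...,0). -/

import Mathlib

theorem ackley_nonneg (n : ℕ) (hn : 1 ≤ n)
    (f : (Fin n → ℝ) → ℝ)
    (hf : ∀ x, f x = -20 * Real.exp (-(1/5) * Real.sqrt ((1/n) * ∑ i, (x i)^2))
      - Real.exp ((1/n) * ∑ i, Real.cos (2 * Real.pi * x i)) + 20 + Real.exp 1) :
    ∀ x : Fin n → ℝ, f x ≥ 0 ∧ (f x = 0 ↔ x = fun _ => 0) := by
  intro x
  have hn' : (0:ℝ) < n := by exact_mod_cast Nat.pos_of_ne_zero (by omega)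
  set S : ℝ := (1/(n:ℝ)) * ∑ i, (x i)^2 with hSdef
  have hS0 : 0 ≤ S := by
    apply mul_nonneg (by positivity)
    exact Finset.sum_nonneg fun i _ => sq_nonneg _
  have hA : Real.exp (-(1/5) * Real.sqrt S) ≤ 1 := by
    rw [Real.exp_le_one_iff]
    nlinarith [Real.sqrt_nonneg S]
  have hBsum : ∑ i, Real.cos (2 * Real.pi * x i) ≤ (n:ℝ) := by
    calc ∑ i, Real.cos (2 * Real.pi * x i) ≤ ∑ _i : Fin n, (1:ℝ) :=
          Finset.sum_le_sum fun i _ => Real.cos_le_one _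
      _ = (n:ℝ) := by simp
  have hB : Real.exp ((1/(n:ℝ)) * ∑ i, Real.cos (2 * Real.pi * x i)) ≤ Real.exp 1 := by
    apply Real.exp_le_exp.mpr
    rw [one_div, inv_mul_le_iff₀ hn']
    linarith
  constructor
  · rw [hf]; linarith
  constructor
  · intro hfx
    rw [hf] at hfx
    have h1 : Real.exp (-(1/5) * Real.sqrt S) = 1 := by linarith
    have h2 : -(1/5) * Real.sqrt S = 0 := by
      have := Real.exp_eq_one_iff (-(1/5) * Real.sqrt S)
      tauto
    have h3 : Real.sqrt S = 0 := by linarith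
    have h4 : S = 0 := by
      have := Real.sqrt_eq_zero hS0 |>.mp h3
      exact this
    have h5 : ∑ i, (x i)^2 = 0 := by
      rw [hSdef] at h4
      field_simp at h4
      simpa using h4
    funext i
    have := Finset.sum_eq_zero_iff_of_nonneg (fun i _ => sq_nonneg (x i)) |>.mp h5 i (Finset.mem_univ i)
    exact pow_eq_zero_iff (n := 2) (by norm_num) |>.mp this
  · intro hx
    subst hx
    rw [hf]
    simp [Real.sqrt_eq_zero', mul_comm]
    rw [mul_inv_cancel₀ (ne_of_gt hn')]
    ring
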